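/- arXiv:0712.4037 — 2 statements merged into one kernel-verified Lean document; each statement's English description precedes it below -/
import Mathlib

section
/- Let E'/E be an extension of algebraically closed fields with transcendence basis {α} (a single element), let K be an infinite subfield of E, and let G be an ordered abelian group. Given finitely many elements s_1, …, s_n of E'(G) ⊆ E'((G)), there exists an E-rational place P of E' sending α and α^{-1} into K such that every coefficient of each s_i lies in the valuation ring O_P, and φ_P(s_i) ∈ E(G) ⊆ E((G)) for each i. -/
noncomputable section

open HahnSeries Classical

/-- A field is real closed: `-1` is not a square, every element or its negative is a square,
and every polynomial of odd degree has a root. -/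
def IsRealClosed' (F : Type*) [Field F] : Prop :=
  (¬ ∃ x : F, x ^ 2 = -1) ∧ (∀ x : F, ∃ y : F, y ^ 2 = x ∨ y ^ 2 = -x) ∧
    ∀ p : Polynomial F, Odd p.natDegree → ∃ x : F, p.eval x = 0

/-- Applying a map `p : F → F'` (e.g. the residue map of a place) to each coefficient
of a generalized power series; coefficients equal to `0` are sent to `0`. -/
def coeffMap {G : Type*} [PartialOrder G] {F F' : Type*} [Zero F] [Zero F']
    (p : F → F') (f : HahnSeries G F) : HahnSeries G F' where
  coeff g := if f.coeff g = 0 then 0 else p (f.coeff g)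
  isPWO_support' := f.isPWO_support'.mono (fun g hg h => by
    simp only [Function.mem_support, h, if_pos] at hg
    exact hg rfl)

variable (F : Type*) [Field F] (G : Type*) [AddCommGroup G] [LinearOrder G] [IsOrderedAddMonoid G]

/-- The minimal support valuation on the field of generalized power series `F((G))`,
with value `⊤` at `0`. -/
def vmin (f : HahnSeries G F) : WithTop G := f.orderTop

/-- The set of generalized power series all of whose coefficients lie in `S`. -/
def coeffIn (S : Set F) : Set (HahnSeries G F) := {f | ∀ g : G, f.coeff g ∈ S}

/-- For a subfield `E ⊆ F`, the subfield `E(G)` of `F((G))`: the fraction field of the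
group ring `E[G]`, i.e. the subfield generated by the monomials with coefficients in `E`. -/
def ratSubfieldOver (E : Subfield F) : Subfield (HahnSeries G F) :=
  Subfield.closure {x | ∃ (g : G) (a : F), a ∈ E ∧ x = HahnSeries.single g a}

/-- The subfield `F(G)` of rational functions inside `F((G))`. -/
def ratSubfield : Subfield (HahnSeries G F) := ratSubfieldOver F G ⊤

/-- The valuation ideal `I_L` of a subset `L ⊆ F((G))` (w.r.t. the minimal support
valuation). -/
def valIdeal (L : Set (HahnSeries G F)) : Set (HahnSeries G F) :=
  {f ∈ L | 0 < vmin F G f}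

/-- The set `U_L = 1 + I_L` of 1-units of a subset `L ⊆ F((G))`. -/
def oneUnits (L : Set (HahnSeries G F)) : Set (HahnSeries G F) :=
  {f ∈ L | 0 < vmin F G (1 - f)}

variable {F G} in
/-- The `K`-linear combination of elements of `F((G))` encoded by a finitely supported
function `c` with values in the subfield `K`. -/
def lincomb {K : Subfield F} (c : HahnSeries G F →₀ K) : HahnSeries G F :=
  c.sum fun b r => (r : F) • b

/-- `B` is a `K`-valuation basis of the (`K`-subspace) subset `L` of `F((G))`:
it is contained in `L`, every element of `L` is a unique finite `K`-linear combination
of elements of `B`, and every such combination realizes as its value the minimum of the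
values of the basis elements occurring in it. -/
def IsValuationBasis (K : Subfield F) (L B : Set (HahnSeries G F)) : Prop :=
  B ⊆ L ∧
    (∀ f ∈ L, ∃! c : HahnSeries G F →₀ K, ↑c.support ⊆ B ∧ f = lincomb c) ∧
    ∀ c : HahnSeries G F →₀ K, ↑c.support ⊆ B →
      vmin F G (lincomb c) = c.support.inf fun b => vmin F G b

/-- `f = ∏ b^(c b)` where the exponents `c b` are rational numbers: there is a common
positive denominator `d` such that `f ^ d = ∏ b ^ (c b * d)` with integer exponents. -/
def qpowCombo (c : HahnSeries G F →₀ ℚ) (f : HahnSeries G F) : Prop :=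
  ∃ d : ℕ, 0 < d ∧ (∀ b ∈ c.support, ((c b) * d).den = 1) ∧
    f ^ d = ∏ b ∈ c.support, b ^ ((c b) * d).num

/-- `B` is a `ℚ`-valuation basis of a subset `L` of the group of `1`-units of `F((G))`,
with respect to the valuation `w f = v_min (1 - f)`, all operations being multiplicative. -/
def IsMultValuationBasis (L B : Set (HahnSeries G F)) : Prop :=
  B ⊆ L ∧
    (∀ f ∈ L, ∃! c : HahnSeries G F →₀ ℚ, ↑c.support ⊆ B ∧ qpowCombo F G c f) ∧
    ∀ c : HahnSeries G F →₀ ℚ, ↑c.support ⊆ B → ∀ f, qpowCombo F G c f →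
      vmin F G (1 - f) = c.support.inf fun b => vmin F G (1 - b)

variable {F} in
/-- An `E`-rational place of `E'` (both subsets of an ambient field `F`): a valuation
subring `dom` of `E'` containing `E`, together with a residue map `res` which is a ring
homomorphism on `dom`, restricts to the identity on `E`, has image in `E` (so the residue
field is `E`), and whose kernel consists exactly of the nonunits of `dom`. -/
structure RatPlace (E E' : Set F) where
  dom : Subring F
  dom_le : (dom : Set F) ⊆ E'
  res : F → F
  res_one : res 1 = 1
  res_add : ∀ x ∈ dom, ∀ y ∈ dom, res (x + y) = res x + res y
  res_mul : ∀ x ∈ dom, ∀ y ∈ dom, res (x * y) = res x * res y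
  res_mem : ∀ x ∈ dom, res x ∈ E
  base_subset : E ⊆ dom
  res_id : ∀ x ∈ E, res x = x
  vring : ∀ x ∈ E', x ∉ dom → x⁻¹ ∈ dom
  res_unit : ∀ x ∈ dom, res x ≠ 0 → x⁻¹ ∈ dom
  res_nonunit : ∀ x ∈ dom, x ≠ 0 → x⁻¹ ∈ dom → res x ≠ 0

variable {F} in
/-- `{α}` is a transcendence basis of `E'` over `E` (inside the ambient field `F`):
`α ∈ E'` is transcendental over `E` and every element of `E'` is algebraic over `E(α)`. -/
def IsSingleTransBasis (E E' : Subfield F) (α : F) : Prop :=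
  α ∈ E' ∧ Transcendental E α ∧
    ∀ x ∈ E', IsAlgebraic (Subfield.closure ((E : Set F) ∪ {α})) x

/-- The transcendence degree reduction property over `K` (for `F` algebraically closed)
of a subset `L` with `F(G) ⊆ L ⊆ F((G))`:
1. for each countable intermediate field `K ≤ E`, `E((G)) ∩ L` is countable and `L` is
   the union of these sets;
2. for intermediate algebraically closed fields `K ≤ E < E'` with `E'/E` of transcendence
   degree 1, any finitely many elements of `E'((G)) ∩ L` have all coefficients in the
   valuation ring of some `E`-rational place `P` of `E'`, with images under `φ_P` in
   `E((G)) ∩ L`;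
3. moreover, for any fixed transcendence basis `{α}` of `E'/E`, the place `P` may be
   chosen to send `α` and `α⁻¹` into `K`. -/
def SatisfiesTDRPAC (K : Subfield F) (L : Set (HahnSeries G F)) : Prop :=
  (∀ E : Subfield F, K ≤ E → (E : Set F).Countable →
      (coeffIn F G ↑E ∩ L).Countable) ∧
  (∀ f ∈ L, ∃ E : Subfield F, K ≤ E ∧ (E : Set F).Countable ∧ f ∈ coeffIn F G ↑E) ∧
  (∀ E E' : Subfield F, K ≤ E → E < E' → IsAlgClosed E → IsAlgClosed E' →
      (∃ α : F, IsSingleTransBasis E E' α) →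
      ∀ (n : ℕ) (s : Fin n → HahnSeries G F),
        (∀ m, s m ∈ coeffIn F G ↑E' ∩ L) →
        ∃ P : RatPlace (E : Set F) (E' : Set F),
          (∀ m, s m ∈ coeffIn F G ↑P.dom) ∧
          ∀ m, coeffMap P.res (s m) ∈ coeffIn F G ↑E ∩ L) ∧
  (∀ E E' : Subfield F, K ≤ E → E < E' → IsAlgClosed E → IsAlgClosed E' →
      ∀ α : F, IsSingleTransBasis E E' α →
      ∀ (n : ℕ) (s : Fin n → HahnSeries G F),
        (∀ m, s m ∈ coeffIn F G ↑E' ∩ L) →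
        ∃ P : RatPlace (E : Set F) (E' : Set F),
          (∀ m, s m ∈ coeffIn F G ↑P.dom) ∧
          (∀ m, coeffMap P.res (s m) ∈ coeffIn F G ↑E ∩ L) ∧
          α ∈ P.dom ∧ α⁻¹ ∈ P.dom ∧ P.res α ∈ K ∧ P.res α⁻¹ ∈ K)

variable {F} in
/-- The set `L ⊕ √-1·L` inside `F'((G))`, where `φ : F →+* F'` identifies `F` with a
subfield of `F'` and `i ∈ F'` is a square root of `-1`. -/
def complexifySet {F' : Type*} [Field F'] (φ : F →+* F') (i : F')
    (L : Set (HahnSeries G F)) : Set (HahnSeries G F') :=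
  {z | ∃ x ∈ L, ∃ y ∈ L,
    z = coeffMap (⇑φ) x + HahnSeries.single (0 : G) i * coeffMap (⇑φ) y}

/-- The transcendence degree reduction property over `K` of `L ⊆ F((G))`, for `F`
algebraically closed or real closed.  In the real closed case it is the requirement that
`L ⊕ √-1·L`, viewed inside `F^a((G))` where `F^a = F(√-1)` is the algebraic closure of
`F`, satisfies the TDRP over (the image of) `K`. -/
def SatisfiesTDRP (K : Subfield F) (L : Set (HahnSeries G F)) : Prop :=
  (IsAlgClosed F ∧ SatisfiesTDRPAC F G K L) ∨
  (IsRealClosed' F ∧ ∃ i : AlgebraicClosure F, i ^ 2 = -1 ∧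
    SatisfiesTDRPAC (AlgebraicClosure F) G
      (K.map (algebraMap F (AlgebraicClosure F)))
      (complexifySet G (algebraMap F (AlgebraicClosure F)) i L))

/-- A transcendence basis `{α_λ}_{λ ∈ I}` of `F` over a subfield `K`: the family is
algebraically independent over `K` and `F` is algebraic over the subfield generated by
`K` and the `α_λ`. -/
def IsTransBasisFamily {F : Type*} [Field F] (K : Subfield F) {I : Type*} (α : I → F) :
    Prop :=
  AlgebraicIndependent K α ∧
    ∀ x : F, IsAlgebraic (Subfield.closure ((K : Set F) ∪ Set.range α)) x

/-- For a subset `S ⊆ I`, the field `K_S`: the relative algebraic closure in `F` of the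
subfield generated by `K` and the transcendence basis elements `α_λ`, `λ ∈ S`. -/
def KXset {F : Type*} [Field F] (K : Subfield F) {I : Type*} (α : I → F) (S : Set I) :
    Set F :=
  {x | IsAlgebraic (Subfield.closure ((K : Set F) ∪ α '' S)) x}


open Polynomial

section HahnAux
variable {F : Type*} [Field F] {G : Type*} [AddCommGroup G] [LinearOrder G] [IsOrderedAddMonoid G] {A : Subring F}

lemma coeffIn_zero : (0 : HahnSeries G F) ∈ coeffIn F G (A : Set F) := by
  intro g; rw [HahnSeries.coeff_zero]; exact A.zero_mem

lemma coeffIn_one : (1 : HahnSeries G F) ∈ coeffIn F G (A : Set F) := by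
  intro g
  rw [HahnSeries.coeff_one]
  split
  · exact A.one_mem
  · exact A.zero_mem

lemma coeffIn_add {x y : HahnSeries G F} (hx : x ∈ coeffIn F G (A : Set F))
    (hy : y ∈ coeffIn F G (A : Set F)) : x + y ∈ coeffIn F G (A : Set F) := by
  intro g; rw [HahnSeries.coeff_add]; exact A.add_mem (hx g) (hy g)

lemma coeffIn_sub {x y : HahnSeries G F} (hx : x ∈ coeffIn F G (A : Set F))
    (hy : y ∈ coeffIn F G (A : Set F)) : x - y ∈ coeffIn F G (A : Set F) := by
  intro g; rw [HahnSeries.coeff_sub]; exact A.sub_mem (hx g) (hy g)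

lemma coeffIn_mul {x y : HahnSeries G F} (hx : x ∈ coeffIn F G (A : Set F))
    (hy : y ∈ coeffIn F G (A : Set F)) : x * y ∈ coeffIn F G (A : Set F) := by
  intro g
  rw [HahnSeries.coeff_mul]
  exact A.sum_mem fun ij _ => A.mul_mem (hx ij.1) (hy ij.2)

lemma coeffIn_pow {x : HahnSeries G F} (hx : x ∈ coeffIn F G (A : Set F)) (n : ℕ) :
    x ^ n ∈ coeffIn F G (A : Set F) := by
  induction n with
  | zero => simpa using coeffIn_one
  | succ n ih => rw [pow_succ]; exact coeffIn_mul ih hx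

lemma coeffIn_single {g : G} {a : F} (ha : a ∈ A) :
    HahnSeries.single g a ∈ coeffIn F G (A : Set F) := by
  intro g'
  rw [HahnSeries.coeff_single]
  split
  · exact ha
  · exact A.zero_mem

lemma coeffIn_inv {x : HahnSeries G F} (hx : x ∈ coeffIn F G (A : Set F))
    (hinv : (x.coeff x.order)⁻¹ ∈ A) : x⁻¹ ∈ coeffIn F G (A : Set F) := by
  by_cases hx0 : x = 0
  · subst hx0; simpa using coeffIn_zero
  · have hlc : x.leadingCoeff = x.coeff x.order := HahnSeries.leadingCoeff_eq
    have hr : x.leadingCoeff⁻¹ * x.leadingCoeff = 1 :=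
      inv_mul_cancel₀ (leadingCoeff_ne_zero.mpr hx0)
    have hu := HahnSeries.unit_aux x hr (-x.order) (neg_add_cancel x.order)
    set ε : HahnSeries G F := 1 - (HahnSeries.single (-x.order)) x.leadingCoeff⁻¹ * x with hε
    have hεA : ε ∈ coeffIn F G (A : Set F) := by
      refine coeffIn_sub coeffIn_one (coeffIn_mul (coeffIn_single ?_) hx)
      rw [hlc]; exact hinv
    set y : HahnSeries G F :=
      (HahnSeries.single (-x.order)) x.leadingCoeff⁻¹ *
        (HahnSeries.SummableFamily.powers ε).hsum with hy
    have hxy : x * y = 1 := by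
      have h := HahnSeries.SummableFamily.one_sub_self_mul_hsum_powers hu
      have h2 : ((HahnSeries.single (-x.order)) x.leadingCoeff⁻¹ * x) *
          (HahnSeries.SummableFamily.powers ε).hsum = 1 := by
        rw [← sub_sub_cancel 1 ((HahnSeries.single (-x.order)) x.leadingCoeff⁻¹ * x), ← hε]
        exact h
      rw [hy, ← mul_assoc, mul_comm x, h2]
    rw [inv_eq_of_mul_eq_one_right hxy, hy]
    refine coeffIn_mul (coeffIn_single (by rw [hlc]; exact hinv)) ?_
    intro g
    rw [HahnSeries.SummableFamily.coeff_hsum_eq_sum]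
    exact A.sum_mem fun i _ => by
      have : (HahnSeries.SummableFamily.powers ε) i = ε ^ i :=
          HahnSeries.SummableFamily.powers_of_orderTop_pos hu i
      rw [this]
      exact coeffIn_pow hεA i g

end HahnAux

section FinSupp
variable {F : Type*} [Field F] {G : Type*} [AddCommGroup G] [LinearOrder G] [IsOrderedAddMonoid G]

/-- The subring of Hahn series with finite support. -/
def finSuppSubring (F : Type*) [Field F] (G : Type*) [AddCommGroup G] [LinearOrder G] [IsOrderedAddMonoid G] :
    Subring (HahnSeries G F) where
  carrier := {x | x.support.Finite}
  zero_mem' := by simp [HahnSeries.support_zero]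
  one_mem' := by
    refine Set.Finite.subset (Set.finite_singleton (0 : G)) ?_
    intro g hg
    by_contra h
    have hg' : (1 : HahnSeries G F).coeff g ≠ 0 := hg
    rw [HahnSeries.coeff_one, if_neg (fun he => h (by simp [he]))] at hg'
    exact hg' rfl
  add_mem' hx hy := Set.Finite.subset (hx.union hy) (HahnSeries.support_add_subset _ _)
  neg_mem' hx := by simpa [HahnSeries.support_neg] using hx
  mul_mem' hx hy := Set.Finite.subset (hx.add hy) HahnSeries.support_mul_subset

lemma eq_sum_single_of_finite {x : HahnSeries G F} (hx : x.support.Finite) :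
    x = ∑ g ∈ hx.toFinset, HahnSeries.single g (x.coeff g) := by
  ext g'
  have : (∑ g ∈ hx.toFinset, HahnSeries.single g (x.coeff g)).coeff g' =
      ∑ g ∈ hx.toFinset, (HahnSeries.single g (x.coeff g)).coeff g' := by
    classical
    induction hx.toFinset using Finset.induction_on with
    | empty => simp
    | insert _ _ h ih => rw [Finset.sum_insert h, Finset.sum_insert h, HahnSeries.coeff_add, ih]
  rw [this]
  by_cases hg : g' ∈ x.support
  · rw [Finset.sum_eq_single g']
    · simp
    · intro b _ hb
      rw [HahnSeries.coeff_single, if_neg (by exact fun h => hb h.symm)]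
    · intro h
      exact absurd (hx.mem_toFinset.mpr hg) h
  · have h0 : x.coeff g' = 0 := by
      by_contra h
      exact hg h
    rw [h0]
    symm
    refine Finset.sum_eq_zero fun b hb => ?_
    rw [HahnSeries.coeff_single]
    split
    · next h => rw [← h]; exact h0
    · rfl

lemma mem_ratSubfieldOver_of_finite {E : Subfield F} {x : HahnSeries G F}
    (hx : x.support.Finite) (hc : ∀ g, x.coeff g ∈ E) : x ∈ ratSubfieldOver F G E := by
  rw [eq_sum_single_of_finite hx]
  refine Subfield.sum_mem _ fun g _ => ?_
  exact Subfield.subset_closure ⟨g, x.coeff g, hc g, rfl⟩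

lemma exists_div_of_mem_ratSubfield {s : HahnSeries G F} (hs : s ∈ ratSubfield F G) :
    ∃ f g : HahnSeries G F, f.support.Finite ∧ g.support.Finite ∧ g ≠ 0 ∧ s = f / g := by
  rw [ratSubfield, ratSubfieldOver, Subfield.mem_closure_iff] at hs
  obtain ⟨y, hy, z, hz, hyz⟩ := hs
  have hsub : Subring.closure {x : HahnSeries G F | ∃ (g : G) (a : F), a ∈ (⊤ : Subfield F) ∧
      x = HahnSeries.single g a} ≤ finSuppSubring F G := by
    rw [Subring.closure_le]
    rintro x ⟨g, a, -, rfl⟩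
    exact Set.Finite.subset (Set.finite_singleton g) HahnSeries.support_single_subset
  by_cases hz0 : z = 0
  · refine ⟨0, 1, by simp [HahnSeries.support_zero], ?_, one_ne_zero, by
      rw [← hyz, hz0, div_zero, zero_div]⟩
    exact (finSuppSubring F G).one_mem
  · exact ⟨y, z, hsub hy, hsub hz, hz0, hyz.symm⟩
end FinSupp

section AlgAux
variable {E' : Type*} [Field E'] (E : Subfield E') (α : E')

/-- Evaluation of polynomials over `E` at `α`, as a ring hom into `E'`. -/
def psiMap : Polynomial ↥E →+* E' := (Polynomial.aeval α).toRingHom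

lemma psiMap_apply (p : Polynomial ↥E) : psiMap E α p = Polynomial.aeval α p := rfl

lemma psiMap_C (e : ↥E) : psiMap E α (Polynomial.C e) = (e : E') := by
  rw [psiMap_apply, Polynomial.aeval_C]; rfl

lemma psiMap_X : psiMap E α Polynomial.X = α := by
  rw [psiMap_apply, Polynomial.aeval_X]

lemma closure_union_singleton_eq_range :
    Subring.closure ((E : Set E') ∪ {α}) = (psiMap E α).range := by
  apply le_antisymm
  · rw [Subring.closure_le]
    rintro x (hx | hx)
    · exact ⟨Polynomial.C ⟨x, hx⟩, psiMap_C E α _⟩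
    · rw [Set.mem_singleton_iff] at hx
      exact ⟨Polynomial.X, by rw [psiMap_X, hx]⟩
  · rintro x ⟨p, rfl⟩
    induction p using Polynomial.induction_on' with
    | add p q hp hq => rw [map_add]; exact Subring.add_mem _ hp hq
    | monomial n a =>
      rw [psiMap_apply, Polynomial.aeval_monomial]
      refine Subring.mul_mem _ ?_ (Subring.pow_mem _ ?_ n)
      · exact Subring.subset_closure (Set.mem_union_left _ a.2)
      · exact Subring.subset_closure (Set.mem_union_right _ rfl)

lemma exists_poly_range {x : E'}
    (hx : IsAlgebraic ↥(Subfield.closure ((E : Set E') ∪ {α})) x) :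
    ∃ P : Polynomial E', P ≠ 0 ∧ (∀ i, P.coeff i ∈ (psiMap E α).range) ∧
      Polynomial.eval x P = 0 := by
  set L := Subfield.closure ((E : Set E') ∪ {α}) with hL
  obtain ⟨p, hp0, hpx⟩ := hx
  set P₀ : Polynomial E' := p.map (algebraMap ↥L E') with hP₀
  have hinj : Function.Injective (algebraMap ↥L E') := (algebraMap ↥L E').injective
  have hP₀0 : P₀ ≠ 0 := (Polynomial.map_ne_zero_iff hinj).mpr hp0
  have hP₀x : Polynomial.eval x P₀ = 0 := by
    rw [hP₀, Polynomial.eval_map, ← Polynomial.aeval_def, hpx]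
  have hcoeffL : ∀ i, P₀.coeff i ∈ L := by
    intro i
    rw [hP₀, Polynomial.coeff_map]
    exact (p.coeff i).2
  -- each element of L is a quotient of elements of the range
  have hquot : ∀ y ∈ L, ∃ a ∈ (psiMap E α).range, ∃ b ∈ (psiMap E α).range,
      b ≠ 0 ∧ y = a / b := by
    intro y hy
    rw [hL, Subfield.mem_closure_iff] at hy
    obtain ⟨a, ha, b, hb, hab⟩ := hy
    rw [closure_union_singleton_eq_range] at ha hb
    by_cases hb0 : b = 0
    · exact ⟨0, Subring.zero_mem _, 1, Subring.one_mem _, one_ne_zero, by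
        rw [← hab, hb0, div_zero, zero_div]⟩
    · exact ⟨a, ha, b, hb, hb0, hab.symm⟩
  choose a ha b hb hb0 hab using fun i => hquot _ (hcoeffL i)
  set D : E' := ∏ i ∈ P₀.support, b i with hD
  have hDne : D ≠ 0 := Finset.prod_ne_zero_iff.mpr fun i _ => hb0 i
  refine ⟨Polynomial.C D * P₀, mul_ne_zero (by simpa using hDne) hP₀0, ?_, by
    rw [Polynomial.eval_mul, hP₀x, mul_zero]⟩
  intro i
  rw [Polynomial.coeff_C_mul]
  by_cases hi : i ∈ P₀.support
  · have hDsplit : D = b i * ∏ j ∈ P₀.support.erase i, b j :=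
      (Finset.mul_prod_erase _ _ hi).symm
    rw [hab i, hDsplit, mul_comm (b i), mul_assoc, mul_div_cancel₀ _ (hb0 i)]
    exact Subring.mul_mem _ (Subring.prod_mem _ fun j _ => hb j) (ha i)
  · rw [Polynomial.notMem_support_iff.mp hi, mul_zero]
    exact Subring.zero_mem _

end AlgAux

section MsetAux
variable {E' : Type*} [Field E'] (B : ValuationSubring E')

/-- The set of nonunits of a valuation subring, as a subset of the field. -/
def mset : Set E' := {y | ∃ hy : y ∈ B, (⟨y, hy⟩ : B) ∈ IsLocalRing.maximalIdeal B}

variable {B}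

lemma mset_subset {y : E'} (hy : y ∈ mset B) : y ∈ B := hy.1

lemma mset_zero : (0 : E') ∈ mset B :=
  ⟨B.zero_mem, (IsLocalRing.maximalIdeal ↥B).zero_mem⟩

lemma mset_add {y z : E'} (hy : y ∈ mset B) (hz : z ∈ mset B) : y + z ∈ mset B := by
  obtain ⟨hy1, hy2⟩ := hy
  obtain ⟨hz1, hz2⟩ := hz
  exact ⟨B.add_mem _ _ hy1 hz1, Ideal.add_mem _ hy2 hz2⟩

lemma mset_mul_left {y z : E'} (hy : y ∈ B) (hz : z ∈ mset B) : y * z ∈ mset B := by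
  obtain ⟨hz1, hz2⟩ := hz
  exact ⟨B.mul_mem _ _ hy hz1,
    Ideal.mul_mem_left _ (⟨y, hy⟩ : B) hz2⟩

lemma mset_neg {y : E'} (hy : y ∈ mset B) : -y ∈ mset B := by
  have := mset_mul_left (B.neg_mem _ B.one_mem) hy
  simpa using this

lemma isUnit_of_inv_mem {y : E'} (hy : y ∈ B) (hy0 : y ≠ 0) (hyi : y⁻¹ ∈ B) :
    IsUnit (⟨y, hy⟩ : B) :=
  IsUnit.of_mul_eq_one ⟨y⁻¹, hyi⟩ (Subtype.ext (mul_inv_cancel₀ hy0))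

lemma not_mem_mset_of_unit {y : E'} (hy : y ∈ B) (hy0 : y ≠ 0) (hyi : y⁻¹ ∈ B) :
    y ∉ mset B := by
  rintro ⟨hy1, hy2⟩
  exact (IsLocalRing.mem_maximalIdeal _).mp hy2 (isUnit_of_inv_mem hy1 hy0 hyi)

lemma inv_mem_of_not_mset {y : E'} (hy : y ∈ B) (hne : y ∉ mset B) : y⁻¹ ∈ B := by
  have hu : IsUnit (⟨y, hy⟩ : B) := by
    by_contra h
    exact hne ⟨hy, (IsLocalRing.mem_maximalIdeal _).mpr h⟩
  obtain ⟨u, hu⟩ := hu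
  have h1 : (⟨y, hy⟩ : B) * u.inv = 1 := by rw [← hu]; exact u.val_inv
  have h2 : y * ((u.inv : B) : E') = 1 := congrArg Subtype.val h1
  rw [inv_eq_of_mul_eq_one_right h2]
  exact (u.inv).2

lemma mset_or {y z : E'} (hy : y ∈ B) (hz : z ∈ B) (h : y * z ∈ mset B) :
    y ∈ mset B ∨ z ∈ mset B := by
  obtain ⟨h1, h2⟩ := h
  have heq : ((⟨y, hy⟩ : B) * ⟨z, hz⟩) = (⟨y * z, h1⟩ : B) := Subtype.ext rfl
  have : (⟨y, hy⟩ : B) * ⟨z, hz⟩ ∈ IsLocalRing.maximalIdeal B := by rw [heq]; exact h2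
  rcases ((IsLocalRing.maximalIdeal.isMaximal ↥B).isPrime.mem_or_mem this) with h | h
  · exact Or.inl ⟨hy, h⟩
  · exact Or.inr ⟨hz, h⟩

lemma mset_multiset_prod {s : Multiset E'} (hs : ∀ y ∈ s, y ∈ B)
    (h : s.prod ∈ mset B) : ∃ y ∈ s, y ∈ mset B := by
  induction s using Multiset.induction_on with
  | empty =>
    exfalso
    rw [Multiset.prod_zero] at h
    exact not_mem_mset_of_unit B.one_mem one_ne_zero (by simpa using B.one_mem) h
  | cons a s ih =>
    rw [Multiset.prod_cons] at h
    have ha : a ∈ B := hs a (Multiset.mem_cons_self a s)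
    have hsB : ∀ y ∈ s, y ∈ B := fun y hy => hs y (Multiset.mem_cons_of_mem hy)
    have hsp : s.prod ∈ B := Subring.multiset_prod_mem B.toSubring s hsB
    rcases mset_or ha hsp h with h | h
    · exact ⟨a, Multiset.mem_cons_self a s, h⟩
    · obtain ⟨y, hy1, hy2⟩ := ih hsB h
      exact ⟨y, Multiset.mem_cons_of_mem hy1, hy2⟩

lemma unit_of_add_mset {e y : E'} (he : e ∈ B) (he0 : e ≠ 0) (hei : e⁻¹ ∈ B)
    (hy : y - e ∈ mset B) : y ∉ mset B := by
  intro hym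
  have : e ∈ mset B := by
    have := mset_add hym (mset_neg hy)
    simpa using this
  exact not_mem_mset_of_unit he he0 hei this

end MsetAux

section OcAux
variable {E' : Type*} [Field E'] (E : Subfield E') (α : E') (c : ↥E)

def evcMap : Polynomial ↥E →+* E' := (Polynomial.aeval ((c : E'))).toRingHom

lemma evcMap_eq (p : Polynomial ↥E) : evcMap E c p = ((p.eval c : ↥E) : E') := by
  show Polynomial.aeval ((c : E')) p = _
  have : (c : E') = algebraMap ↥E E' c := rfl
  rw [this, Polynomial.aeval_algebraMap_apply]
  congr 1

lemma exists_valuation_place (htr : Transcendental ↥E α) :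
    ∃ B : ValuationSubring E',
      (∀ p : Polynomial ↥E, psiMap E α p ∈ B) ∧
      (α - ↑c ∈ mset B) ∧
      (∀ p : Polynomial ↥E, p.eval c ≠ 0 → (psiMap E α p)⁻¹ ∈ B) := by
  have hinj : Function.Injective (psiMap E α) := by
    have := transcendental_iff_injective.mp htr
    exact this
  have hli : Function.LeftInverse (Function.invFun (psiMap E α)) (psiMap E α) :=
    Function.leftInverse_invFun hinj
  set φc : (psiMap E α).range →+* E' :=
    (evcMap E c).comp ((RingEquiv.ofLeftInverse hli).symm : (psiMap E α).range ≃+* _) with hφc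
  have key : ∀ p : Polynomial ↥E, ∀ h : psiMap E α p ∈ (psiMap E α).range,
      φc ⟨psiMap E α p, h⟩ = evcMap E c p := by
    intro p h
    have h1 : (⟨psiMap E α p, h⟩ : (psiMap E α).range) = RingEquiv.ofLeftInverse hli p :=
      Subtype.ext rfl
    rw [hφc]
    simp only [RingHom.comp_apply, h1, RingEquiv.coe_toRingHom]
    rw [RingEquiv.symm_apply_apply]
  haveI hker : (RingHom.ker φc).IsPrime := RingHom.ker_isPrime φc
  set Oc : LocalSubring E' := LocalSubring.ofPrime (psiMap E α).range (RingHom.ker φc) with hOc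
  obtain ⟨B, hB⟩ := LocalSubring.exists_le_valuationSubring Oc
  obtain ⟨hle, hloc⟩ := hB
  have hRle : ((psiMap E α).range : Subring E') ≤ Oc.toSubring := LocalSubring.le_ofPrime _ _
  have hmemOc : ∀ p : Polynomial ↥E, psiMap E α p ∈ Oc.toSubring :=
    fun p => hRle ⟨p, rfl⟩
  have hmemB : ∀ p : Polynomial ↥E, psiMap E α p ∈ B :=
    fun p => hle (hmemOc p)
  refine ⟨B, hmemB, ?_, ?_⟩
  · -- α - c is a nonunit
    have hψ : psiMap E α (Polynomial.X - Polynomial.C c) = α - ↑c := by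
      rw [map_sub, psiMap_X, psiMap_C]
    set y₀ : (psiMap E α).range := ⟨psiMap E α (Polynomial.X - Polynomial.C c), ⟨_, rfl⟩⟩ with hy₀
    have hky : y₀ ∈ RingHom.ker φc := by
      rw [RingHom.mem_ker, show φc y₀ = evcMap E c (Polynomial.X - Polynomial.C c) from key _ _, evcMap_eq]
      simp
    have hnu : ¬ IsUnit (algebraMap ((psiMap E α).range) Oc.toSubring y₀) := by
      rw [IsLocalization.AtPrime.isUnit_to_map_iff Oc.toSubring (RingHom.ker φc) y₀]
      intro h
      exact h hky
    have hnu2 : ¬ IsUnit (Subring.inclusion hle (algebraMap ((psiMap E α).range) Oc.toSubring y₀)) := by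
      intro h
      exact hnu (hloc.1 _ h)
    have hval : ((Subring.inclusion hle (algebraMap ((psiMap E α).range) Oc.toSubring y₀)) : E') =
        α - ↑c := by rw [← hψ]; rfl
    have hmem : α - ↑c ∈ B := hψ ▸ hmemB _
    refine ⟨hmem, ?_⟩
    rw [IsLocalRing.mem_maximalIdeal]
    intro hu
    apply hnu2
    have : (⟨α - ↑c, hmem⟩ : B) =
        (Subring.inclusion hle (algebraMap ((psiMap E α).range) Oc.toSubring y₀)) := by
      exact Subtype.ext hval.symm
    rw [← this]
    exact hu
  · -- inverses of polynomials not vanishing at c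
    intro p hp
    set y : (psiMap E α).range := ⟨psiMap E α p, ⟨p, rfl⟩⟩ with hy
    have hky : y ∉ RingHom.ker φc := by
      rw [RingHom.mem_ker, show φc y = evcMap E c p from key _ _, evcMap_eq]
      intro h
      exact hp (by exact_mod_cast h)
    have hu : IsUnit (algebraMap ((psiMap E α).range) Oc.toSubring y) := by
      rw [IsLocalization.AtPrime.isUnit_to_map_iff Oc.toSubring (RingHom.ker φc) y]
      exact hky
    obtain ⟨u, hu⟩ := hu
    have h1 : u.val * u.inv = 1 := u.val_inv
    have h2 : (psiMap E α p) * ((u.inv : Oc.toSubring) : E') = 1 := by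
      have h3 : ((u.val : Oc.toSubring) : E') * ((u.inv : Oc.toSubring) : E') = 1 := by
        exact_mod_cast congrArg Subtype.val h1
      rw [hu] at h3
      exact h3
    rw [inv_eq_of_mul_eq_one_right h2]
    exact hle (u.inv).2
end OcAux

section Residue
variable {E' : Type*} [Field E'] {E : Subfield E'} {α : E'} {c : ↥E} {B : ValuationSubring E'}

lemma psi_sub_eval_mem_mset (hmemB : ∀ p : Polynomial ↥E, psiMap E α p ∈ B)
    (hmc : α - ↑c ∈ mset B) (p : Polynomial ↥E) :
    psiMap E α p - ((p.eval c : ↥E) : E') ∈ mset B := by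
  obtain ⟨w, hw⟩ := Polynomial.X_sub_C_dvd_sub_C_eval (a := c) (p := p)
  have h2 : psiMap E α (p - Polynomial.C (p.eval c)) =
      psiMap E α ((Polynomial.X - Polynomial.C c) * w) := congrArg _ hw
  rw [map_sub, psiMap_C, map_mul, map_sub, psiMap_X, psiMap_C] at h2
  rw [h2, mul_comm]
  exact mset_mul_left (hmemB w) hmc

lemma exists_residue (hE : IsAlgClosed ↥E)
    (halg : ∀ x : E', IsAlgebraic ↥(Subfield.closure ((E : Set E') ∪ {α})) x)
    (htr : Transcendental ↥E α)
    (hmemB : ∀ p : Polynomial ↥E, psiMap E α p ∈ B)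
    (hEB : ∀ e : ↥E, (e : E') ∈ B)
    (hmc : α - ↑c ∈ mset B)
    {x : E'} (hx : x ∈ B) : ∃ e : ↥E, x - ↑e ∈ mset B := by
  classical
  obtain ⟨P, hP0, hPc, hPx⟩ := exists_poly_range E α (halg x)
  choose q hq using fun i => hPc i
  set N := P.natDegree with hN
  have hqN : q N ≠ 0 := by
    intro h
    have : P.coeff N = 0 := by rw [← hq N, h, map_zero]
    exact Polynomial.leadingCoeff_ne_zero.mpr hP0 this
  set Sfin := (Finset.range (N + 1)).filter (fun i => q i ≠ 0) with hSfin
  have hNS : N ∈ Sfin := Finset.mem_filter.mpr ⟨Finset.self_mem_range_succ N, hqN⟩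
  have hSne : Sfin.Nonempty := ⟨N, hNS⟩
  set k := Sfin.inf' hSne (fun i => (q i).rootMultiplicity c) with hk
  obtain ⟨i₀, hi₀S, hi₀⟩ := Finset.exists_mem_eq_inf' hSne (fun i => (q i).rootMultiplicity c)
  have hdvd : ∀ i, (Polynomial.X - Polynomial.C c) ^ k ∣ q i := by
    intro i
    by_cases h : q i = 0
    · rw [h]; exact dvd_zero _
    · by_cases hiR : i ∈ Finset.range (N + 1)
      · have hi : i ∈ Sfin := Finset.mem_filter.mpr ⟨hiR, h⟩
        have hki : k ≤ (q i).rootMultiplicity c := Finset.inf'_le _ hi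
        exact dvd_trans (pow_dvd_pow _ hki) (Polynomial.pow_rootMultiplicity_dvd _ c)
      · exfalso
        apply h
        have hinj : Function.Injective (psiMap E α) := transcendental_iff_injective.mp htr
        apply hinj
        rw [hq i, map_zero]
        exact Polynomial.coeff_eq_zero_of_natDegree_lt
          (by simpa [Nat.lt_succ_iff, Nat.succ_le_iff] using
            lt_of_not_ge (fun hle => hiR (Finset.mem_range.mpr (Nat.lt_succ_of_le hle))))
  set q' : ℕ → Polynomial ↥E := fun i => q i /ₘ (Polynomial.X - Polynomial.C c) ^ k with hq'
  have hmonic : ((Polynomial.X - Polynomial.C c) ^ k).Monic := (Polynomial.monic_X_sub_C c).pow k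
  have hfac : ∀ i, q i = (Polynomial.X - Polynomial.C c) ^ k * q' i := by
    intro i
    have hmod : q i %ₘ ((Polynomial.X - Polynomial.C c) ^ k) = 0 :=
      (Polynomial.modByMonic_eq_zero_iff_dvd hmonic).mpr (hdvd i)
    have h3 := Polynomial.modByMonic_add_div (q i) ((Polynomial.X - Polynomial.C c) ^ k)
    rw [hmod, zero_add] at h3
    exact h3.symm
  have hi₀0 : (q' i₀).eval c ≠ 0 := by
    intro h
    have h1 : (Polynomial.X - Polynomial.C c) ∣ q' i₀ := Polynomial.dvd_iff_isRoot.mpr h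
    have h2 : (Polynomial.X - Polynomial.C c) ^ (k + 1) ∣ q i₀ := by
      rw [hfac i₀, pow_succ]
      exact mul_dvd_mul dvd_rfl h1
    have hqi₀ : q i₀ ≠ 0 := (Finset.mem_filter.mp hi₀S).2
    have h4 := Polynomial.pow_rootMultiplicity_not_dvd hqi₀ c
    rw [← hi₀] at h4
    exact h4 h2
  have hαc : (α - ↑c) ≠ 0 := by
    intro h
    rw [sub_eq_zero] at h
    apply htr
    rw [h]
    exact isAlgebraic_algebraMap c
  have hrel : ∑ i ∈ Finset.range (N + 1), psiMap E α (q' i) * x ^ i = 0 := by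
    have h0 : Polynomial.eval x P = ∑ i ∈ Finset.range (N + 1), psiMap E α (q i) * x ^ i := by
      rw [Polynomial.eval_eq_sum_range]
      exact Finset.sum_congr rfl fun i _ => by rw [hq i]
    have hterm : ∀ i ∈ Finset.range (N + 1), psiMap E α (q i) * x ^ i
        = (α - ↑c) ^ k * (psiMap E α (q' i) * x ^ i) := by
      intro i _
      rw [hfac i, map_mul, map_pow, map_sub, psiMap_X, psiMap_C, mul_assoc]
    have h1 : (0 : E') = (α - ↑c) ^ k *
        ∑ i ∈ Finset.range (N + 1), psiMap E α (q' i) * x ^ i := by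
      rw [← hPx, h0, Finset.sum_congr rfl hterm, ← Finset.mul_sum]
    rcases mul_eq_zero.mp h1.symm with h | h
    · exact absurd h (pow_ne_zero _ hαc)
    · exact h
  set W : Polynomial ↥E :=
    ∑ i ∈ Finset.range (N + 1), Polynomial.C ((q' i).eval c) * Polynomial.X ^ i with hW
  have hWi₀ : W.coeff i₀ = (q' i₀).eval c := by
    rw [hW, Polynomial.finset_sum_coeff]
    rw [Finset.sum_eq_single i₀]
    · rw [Polynomial.coeff_C_mul, Polynomial.coeff_X_pow, if_pos rfl, mul_one]
    · intro b _ hb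
      rw [Polynomial.coeff_C_mul, Polynomial.coeff_X_pow, if_neg (fun hh => hb hh.symm), mul_zero]
    · intro hni
      exact absurd (Finset.mem_filter.mp hi₀S).1 hni
  have hW0 : W ≠ 0 := by
    intro h
    apply hi₀0
    rw [← hWi₀, h, Polynomial.coeff_zero]
  have hWeval : Polynomial.eval x (W.map (algebraMap ↥E E')) ∈ mset B := by
    have he1 : Polynomial.eval x (W.map (algebraMap ↥E E')) =
        ∑ i ∈ Finset.range (N + 1), ((((q' i).eval c) : ↥E) : E') * x ^ i := by
      rw [hW, Polynomial.map_sum, Polynomial.eval_finset_sum]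
      refine Finset.sum_congr rfl fun i _ => ?_
      rw [Polynomial.map_mul, Polynomial.map_C, Polynomial.map_pow, Polynomial.map_X,
        Polynomial.eval_mul, Polynomial.eval_C, Polynomial.eval_pow, Polynomial.eval_X]
      rfl
    rw [he1, ← sub_zero (∑ i ∈ Finset.range (N + 1), ((((q' i).eval c) : ↥E) : E') * x ^ i),
      ← hrel, ← Finset.sum_sub_distrib]
    have he2 : ∀ i ∈ Finset.range (N + 1),
        ((((q' i).eval c) : ↥E) : E') * x ^ i - psiMap E α (q' i) * x ^ i ∈ mset B := by
      intro i _
      have := mset_neg (psi_sub_eval_mem_mset hmemB hmc (q' i))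
      rw [neg_sub] at this
      have h5 : ((((q' i).eval c) : ↥E) : E') * x ^ i - psiMap E α (q' i) * x ^ i
          = x ^ i * (((((q' i).eval c) : ↥E) : E') - psiMap E α (q' i)) := by ring
      rw [h5]
      exact mset_mul_left (pow_mem hx i) this
    exact Finset.sum_induction _ (· ∈ mset B) (fun _ _ => mset_add) mset_zero he2
  haveI : IsAlgClosed ↥E := hE
  have hsplit : W.Splits := IsAlgClosed.splits W
  have hfacW := Polynomial.Splits.eq_prod_roots hsplit
  have heval : Polynomial.eval x (W.map (algebraMap ↥E E')) =
      ((W.leadingCoeff : ↥E) : E') * (W.roots.map (fun e : ↥E => x - (e : E'))).prod := by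
    conv_lhs => rw [hfacW]
    rw [Polynomial.map_mul, Polynomial.map_C, Polynomial.eval_mul, Polynomial.eval_C]
    congr 1
    rw [Polynomial.map_multiset_prod, Multiset.map_map, Polynomial.eval_multiset_prod,
      Multiset.map_map]
    congr 1
    refine Multiset.map_congr rfl fun e _ => ?_
    simp only [Function.comp_apply, Polynomial.map_sub, Polynomial.map_X, Polynomial.map_C,
      Polynomial.eval_sub, Polynomial.eval_X, Polynomial.eval_C]
    rfl
  rw [heval] at hWeval
  have hlc0 : (W.leadingCoeff : E') ≠ 0 := by
    intro h
    exact Polynomial.leadingCoeff_ne_zero.mpr hW0 (by exact_mod_cast h)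
  have hprodB : ∀ y ∈ W.roots.map (fun e : ↥E => x - (e : E')), y ∈ B := by
    intro y hy
    obtain ⟨e, _, rfl⟩ := Multiset.mem_map.mp hy
    exact sub_mem hx (hEB e)
  have hprodmem : (W.roots.map (fun e : ↥E => x - (e : E'))).prod ∈ mset B := by
    rcases mset_or (hEB W.leadingCoeff)
      (Subring.multiset_prod_mem B.toSubring _ hprodB) hWeval with h | h
    · exfalso
      refine not_mem_mset_of_unit (hEB W.leadingCoeff) hlc0 ?_ h
      have : (W.leadingCoeff : E')⁻¹ = ((W.leadingCoeff⁻¹ : ↥E) : E') := by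
        rcases eq_or_ne W.leadingCoeff 0 with h0 | h0
        · rw [h0]; simp
        · simp
      rw [this]
      exact hEB _
    · exact h
  obtain ⟨y, hy1, hy2⟩ := mset_multiset_prod hprodB hprodmem
  obtain ⟨e, _, rfl⟩ := Multiset.mem_map.mp hy1
  exact ⟨e, hy2⟩

end Residue

section ResFun
variable {E' : Type*} [Field E'] (E : Subfield E') (B : ValuationSubring E')

/-- The residue map: sends `x` to the unique `e ∈ E` with `x - e` in the maximal ideal. -/
def resFun : E' → E' :=
  fun x => if h : ∃ e : ↥E, x - ↑e ∈ mset B then ↑h.choose else 0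

variable {E B}

lemma res_unique (hEB : ∀ e : ↥E, (e : E') ∈ B) {x : E'} {e₁ e₂ : ↥E}
    (h1 : x - ↑e₁ ∈ mset B) (h2 : x - ↑e₂ ∈ mset B) : e₁ = e₂ := by
  by_contra hne
  have hd : ((e₂ - e₁ : ↥E) : E') ∈ mset B := by
    have := mset_add (mset_neg h2) h1
    have heq : -(x - ↑e₂) + (x - ↑e₁) = ((e₂ - e₁ : ↥E) : E') := by
      push_cast
      ring
    rwa [heq] at this
  have hd0 : ((e₂ - e₁ : ↥E) : E') ≠ 0 := by
    intro h
    exact hne (sub_eq_zero.mp (by exact_mod_cast h)).symm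
  refine not_mem_mset_of_unit (hEB _) hd0 ?_ hd
  have : ((e₂ - e₁ : ↥E) : E')⁻¹ = (((e₂ - e₁)⁻¹ : ↥E) : E') := by push_cast; ring
  rw [this]
  exact hEB _

lemma resFun_spec (hEB : ∀ e : ↥E, (e : E') ∈ B) {x : E'} {e : ↥E}
    (h : x - ↑e ∈ mset B) : resFun E B x = ↑e := by
  rw [resFun, dif_pos ⟨e, h⟩]
  exact congrArg _ (res_unique hEB (⟨e, h⟩ : ∃ e : ↥E, x - ↑e ∈ mset B).choose_spec h)

lemma resFun_mem (x : E') : resFun E B x ∈ E := by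
  rw [resFun]
  split
  · exact Subtype.coe_prop _
  · exact E.zero_mem

lemma resFun_zero (hEB : ∀ e : ↥E, (e : E') ∈ B) : resFun E B 0 = 0 := by
  have := resFun_spec (B := B) hEB (x := (0 : E')) (e := 0) (by simpa using mset_zero)
  simpa using this

end ResFun

section Integral
variable {E' : Type*} [Field E']

lemma isIntegral_of_poly {S : Subring E'} {x : E'} {P : Polynomial E'} (hm : P.Monic)
    (hc : ∀ i, P.coeff i ∈ S) (hev : P.eval x = 0) : IsIntegral S x := by
  have hfr : ↑P.coeffs ⊆ (S : Set E') := by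
    intro y hy
    obtain ⟨n, _, rfl⟩ := Polynomial.mem_coeffs_iff.mp hy
    exact hc n
  have hmap := Polynomial.map_toSubring P S hfr
  have halgmap : (algebraMap ↥S E') = S.subtype := rfl
  refine ⟨P.toSubring S hfr, ?_, ?_⟩
  · have hinj : Function.Injective (S.subtype) := Subtype.coe_injective
    have hdeg : (P.toSubring S hfr).natDegree = P.natDegree := by
      conv_rhs => rw [← hmap]
      rw [Polynomial.natDegree_map_eq_of_injective hinj]
    have h1 : ∀ i, (((P.toSubring S hfr).coeff i : ↥S) : E') = P.coeff i := by
      intro i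
      conv_rhs => rw [← hmap]
      rw [Polynomial.coeff_map]
      rfl
    rw [Polynomial.Monic, Polynomial.leadingCoeff, hdeg]
    apply Subtype.ext
    rw [h1]
    exact hm
  · show Polynomial.eval₂ (algebraMap ↥S E') x (P.toSubring S hfr) = 0
    rw [halgmap, Polynomial.eval₂_eq_eval_map, hmap, hev]

end Integral

section CoeffMapAux
variable {E' : Type*} [Field E'] {G : Type*} [AddCommGroup G] [LinearOrder G] [IsOrderedAddMonoid G]

lemma coeffMap_coeff {r : E' → E'} (hr0 : r 0 = 0) (f : HahnSeries G E') (g : G) :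
    (coeffMap r f).coeff g = r (f.coeff g) := by
  show (if f.coeff g = 0 then 0 else r (f.coeff g)) = r (f.coeff g)
  split
  · next h => rw [h, hr0]
  · rfl

lemma coeffMap_support_subset {r : E' → E'} (f : HahnSeries G E') :
    (coeffMap r f).support ⊆ f.support := by
  intro g hg
  by_contra h
  have h0 : f.coeff g = 0 := by
    by_contra h1
    exact h h1
  have : (coeffMap r f).coeff g = 0 := by
    show (if f.coeff g = 0 then 0 else r (f.coeff g)) = 0
    rw [if_pos h0]
  exact hg this

lemma r_sum {S : Subring E'} {r : E' → E'} (hr0 : r 0 = 0)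
    (hadd : ∀ x ∈ S, ∀ y ∈ S, r (x + y) = r x + r y)
    {ι : Type*} (t : Finset ι) (φ : ι → E') (hφ : ∀ i ∈ t, φ i ∈ S) :
    r (∑ i ∈ t, φ i) = ∑ i ∈ t, r (φ i) := by
  classical
  induction t using Finset.induction_on with
  | empty => simpa using hr0
  | insert _ _ hnotmem ih =>
    next a tt =>
    rw [Finset.sum_insert hnotmem, Finset.sum_insert hnotmem,
      hadd _ (hφ a (Finset.mem_insert_self a tt)) _
        (Subring.sum_mem _ fun i hi => hφ i (Finset.mem_insert_of_mem hi)),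
      ih (fun i hi => hφ i (Finset.mem_insert_of_mem hi))]

lemma coeffMap_mul {S : Subring E'} {r : E' → E'} (hr0 : r 0 = 0)
    (hadd : ∀ x ∈ S, ∀ y ∈ S, r (x + y) = r x + r y)
    (hmul : ∀ x ∈ S, ∀ y ∈ S, r (x * y) = r x * r y)
    {x y : HahnSeries G E'} (hx : x ∈ coeffIn E' G (S : Set E'))
    (hy : y ∈ coeffIn E' G (S : Set E')) :
    coeffMap r (x * y) = coeffMap r x * coeffMap r y := by
  ext g
  rw [coeffMap_coeff hr0, HahnSeries.coeff_mul,
    r_sum hr0 hadd _ _ (fun ij _ => S.mul_mem (hx ij.1) (hy ij.2))]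
  have hright : (coeffMap r x * coeffMap r y).coeff g =
      ∑ ij ∈ Finset.antidiagonal x.isPWO_support y.isPWO_support g,
        (coeffMap r x).coeff ij.1 * (coeffMap r y).coeff ij.2 := by
    rw [HahnSeries.coeff_mul]
    refine Finset.sum_subset ?_ ?_
    · intro ij hij
      rw [Finset.mem_antidiagonal] at hij ⊢
      exact ⟨coeffMap_support_subset x hij.1, coeffMap_support_subset y hij.2.1, hij.2.2⟩
    · intro ij hij hnotin
      by_contra hne0
      apply hnotin
      rw [Finset.mem_antidiagonal] at hij ⊢
      have h1 : (coeffMap r x).coeff ij.1 ≠ 0 := fun h => hne0 (by rw [h, zero_mul])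
      have h2 : (coeffMap r y).coeff ij.2 ≠ 0 := fun h => hne0 (by rw [h, mul_zero])
      exact ⟨h1, h2, hij.2.2⟩
  rw [hright]
  exact Finset.sum_congr rfl fun ij hij => by
    rw [Finset.mem_antidiagonal] at hij
    rw [coeffMap_coeff hr0, coeffMap_coeff hr0, hmul _ (hx ij.1) _ (hy ij.2)]
end CoeffMapAux


section MemB
variable {E' : Type*} [Field E'] {B : ValuationSubring E'}

lemma mem_B_of_unit_leading {t : E'} {P : Polynomial E'} (hP0 : P ≠ 0)
    (hcoef : ∀ i, P.coeff i ∈ B) (hlead : (P.leadingCoeff)⁻¹ ∈ B)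
    (hev : P.eval t = 0) : t ∈ B := by
  set P' := P * Polynomial.C (P.leadingCoeff)⁻¹ with hP'
  have hm : P'.Monic := Polynomial.monic_mul_leadingCoeff_inv hP0
  have hc' : ∀ i, P'.coeff i ∈ B.toSubring := by
    intro i
    rw [hP', Polynomial.coeff_mul_C]
    exact Subring.mul_mem _ (hcoef i) hlead
  have hev' : P'.eval t = 0 := by rw [hP', Polynomial.eval_mul, hev, zero_mul]
  have hint : IsIntegral B.toSubring t := isIntegral_of_poly hm hc' hev'
  exact LocalSubring.mem_of_isMax_of_isIntegral (ValuationSubring.isMax_toLocalSubring B) hint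

end MemB


/-- Let `E'/E` be an extension of algebraically closed fields with transcendence basis
`{α}`, `K` an infinite subfield of `E`, and `G` an ordered abelian group.  Given finitely
many `s₁, …, s_n ∈ E'(G) ⊆ E'((G))`, there is an `E`-rational place `P` of `E'` sending
`α, α⁻¹` into `K` such that all coefficients of the `s_i` lie in the valuation ring of
`P` and `φ_P(s_i) ∈ E(G) ⊆ E((G))` for each `i`. -/
theorem place_of_rational_series
    (E' : Type*) [Field E'] (K E : Subfield E') (hKE : K ≤ E)
    (hKinf : (K : Set E').Infinite)
    (hE : IsAlgClosed E) (hE' : IsAlgClosed E')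
    (α : E') (hα : IsSingleTransBasis E ⊤ α)
    (G : Type*) [AddCommGroup G] [LinearOrder G] [IsOrderedAddMonoid G]
    (n : ℕ) (s : Fin n → HahnSeries G E') (hs : ∀ m, s m ∈ ratSubfield E' G) :
    ∃ P : RatPlace (E : Set E') (Set.univ : Set E'),
      α ∈ P.dom ∧ α⁻¹ ∈ P.dom ∧ P.res α ∈ K ∧ P.res α⁻¹ ∈ K ∧
      (∀ m, s m ∈ coeffIn E' G ↑P.dom) ∧
      ∀ m, coeffMap P.res (s m) ∈ ratSubfieldOver E' G E := by
  classical
  obtain ⟨hαtop, htr, halg⟩ := hα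
  have halg' : ∀ x : E', IsAlgebraic ↥(Subfield.closure ((E : Set E') ∪ {α})) x :=
    fun x => halg x trivial
  choose f g hf hg hg0 hsfg using fun m => exists_div_of_mem_ratSubfield (hs m)
  choose Pt hPt0 hPtc hPtev using fun t : E' => exists_poly_range E α (halg' t)
  choose qt hqt using fun t i => hPtc t i
  set lead : E' → Polynomial ↥E := fun t => qt t (Pt t).natDegree with hlead
  have hlead0 : ∀ t, lead t ≠ 0 := by
    intro t h
    have h2 : (Pt t).coeff (Pt t).natDegree = 0 := by
      rw [← hqt t (Pt t).natDegree]
      show psiMap E α (lead t) = 0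
      rw [h, map_zero]
    exact Polynomial.leadingCoeff_ne_zero.mpr (hPt0 t) h2
  set T : Finset E' := Finset.univ.biUnion (fun m : Fin n =>
    (((hf m).toFinset.image (f m).coeff) ∪ ((hg m).toFinset.image (g m).coeff)) ∪
      {((g m).leadingCoeff)⁻¹}) with hT
  set Φ : Polynomial ↥E := Polynomial.X * ∏ t ∈ T, lead t with hΦ
  have hΦ0 : Φ ≠ 0 := mul_ne_zero Polynomial.X_ne_zero
    (Finset.prod_ne_zero_iff.mpr fun t _ => hlead0 t)
  have hKpre : ((fun e : ↥E => (e : E')) ⁻¹' (K : Set E')).Infinite :=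
    hKinf.preimage (fun x hx => ⟨⟨x, hKE hx⟩, rfl⟩)
  obtain ⟨c, hcK, hcroot⟩ := (hKpre.diff (Polynomial.finite_setOf_isRoot hΦ0)).nonempty
  have hΦc : Φ.eval c ≠ 0 := fun h => hcroot h
  have hc0 : c ≠ 0 := by
    intro h
    apply hΦc
    rw [hΦ, Polynomial.eval_mul, Polynomial.eval_X, h, zero_mul]
  have hc0' : (c : E') ≠ 0 := fun h => hc0 (by exact_mod_cast h)
  have hclead : ∀ t ∈ T, (lead t).eval c ≠ 0 := by
    intro t ht h
    apply hΦc
    rw [hΦ, Polynomial.eval_mul, Polynomial.eval_prod, Finset.prod_eq_zero ht h, mul_zero]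
  obtain ⟨B, hmemB, hmc, hinvB⟩ := exists_valuation_place E α c htr
  have hEB : ∀ e : ↥E, (e : E') ∈ B := fun e => by
    have := hmemB (Polynomial.C e)
    rwa [psiMap_C] at this
  have hEinvB : ∀ e : ↥E, ((e : E'))⁻¹ ∈ B := by
    intro e
    have h1 : ((e : E'))⁻¹ = ((e⁻¹ : ↥E) : E') := by norm_cast
    rw [h1]; exact hEB _
  have hαB : α ∈ B := by
    have := hmemB Polynomial.X
    rwa [psiMap_X] at this
  have hαinvB : α⁻¹ ∈ B := by
    have := hinvB Polynomial.X (by rw [Polynomial.eval_X]; exact hc0)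
    rwa [psiMap_X] at this
  have hTmem : ∀ t ∈ T, t ∈ B := by
    intro t ht
    refine mem_B_of_unit_leading (hPt0 t) (fun i => ?_) ?_ (hPtev t)
    · rw [← hqt t i]; exact hmemB _
    · rw [Polynomial.leadingCoeff, ← hqt t (Pt t).natDegree]
      exact hinvB _ (hclead t ht)
  have hfB : ∀ m, f m ∈ coeffIn E' G (B.toSubring : Set E') := by
    intro m g'
    by_cases h : (f m).coeff g' = 0
    · rw [h]; exact Subring.zero_mem _
    · refine hTmem _ ?_
      rw [hT]
      refine Finset.mem_biUnion.mpr ⟨m, Finset.mem_univ m, ?_⟩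
      refine Finset.mem_union_left _ (Finset.mem_union_left _ ?_)
      exact Finset.mem_image.mpr ⟨g', (hf m).mem_toFinset.mpr h, rfl⟩
  have hgB : ∀ m, g m ∈ coeffIn E' G (B.toSubring : Set E') := by
    intro m g'
    by_cases h : (g m).coeff g' = 0
    · rw [h]; exact Subring.zero_mem _
    · refine hTmem _ ?_
      rw [hT]
      refine Finset.mem_biUnion.mpr ⟨m, Finset.mem_univ m, ?_⟩
      refine Finset.mem_union_left _ (Finset.mem_union_right _ ?_)
      exact Finset.mem_image.mpr ⟨g', (hg m).mem_toFinset.mpr h, rfl⟩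
  have hglcinvB : ∀ m, ((g m).leadingCoeff)⁻¹ ∈ B := by
    intro m
    refine hTmem _ ?_
    rw [hT]
    refine Finset.mem_biUnion.mpr ⟨m, Finset.mem_univ m, ?_⟩
    exact Finset.mem_union_right _ (Finset.mem_singleton_self _)
  have hsB : ∀ m, s m ∈ coeffIn E' G (B.toSubring : Set E') := by
    intro m
    rw [hsfg m, div_eq_mul_inv]
    refine coeffIn_mul (hfB m) (coeffIn_inv (hgB m) ?_)
    rw [← HahnSeries.leadingCoeff_eq]
    exact hglcinvB m
  haveI hEalg : IsAlgClosed ↥E := hE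
  have hresex : ∀ x ∈ B, ∃ e : ↥E, x - ↑e ∈ mset B := fun x hx =>
    exists_residue hEalg halg' htr hmemB hEB hmc hx
  set res := resFun E B with hresdef
  have hspec : ∀ {x : E'} {e : ↥E}, x - ↑e ∈ mset B → res x = ↑e :=
    fun {x e} h => resFun_spec hEB h
  have hres0 : res 0 = 0 := resFun_zero hEB
  have hresid : ∀ x ∈ E, res x = x := by
    intro x hx
    have h1 : x - ((⟨x, hx⟩ : ↥E) : E') ∈ mset B := by
      have h2 : x - ((⟨x, hx⟩ : ↥E) : E') = 0 := sub_self x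
      rw [h2]
      exact mset_zero
    exact hspec h1
  have hresone : res 1 = 1 := hresid 1 E.one_mem
  have hresadd : ∀ x ∈ B.toSubring, ∀ y ∈ B.toSubring, res (x + y) = res x + res y := by
    intro x hx y hy
    obtain ⟨ex, hex⟩ := hresex x hx
    obtain ⟨ey, hey⟩ := hresex y hy
    have hid : (x + y) - ((ex + ey : ↥E) : E') = (x - ↑ex) + (y - ↑ey) := by
      push_cast; ring
    have hmem : (x + y) - ((ex + ey : ↥E) : E') ∈ mset B := by
      rw [hid]; exact mset_add hex hey
    rw [hspec hex, hspec hey, hspec hmem]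
    push_cast; ring
  have hresmul : ∀ x ∈ B.toSubring, ∀ y ∈ B.toSubring, res (x * y) = res x * res y := by
    intro x hx y hy
    obtain ⟨ex, hex⟩ := hresex x hx
    obtain ⟨ey, hey⟩ := hresex y hy
    have hid : (x * y) - ((ex * ey : ↥E) : E') = x * (y - ↑ey) + ↑ey * (x - ↑ex) := by
      push_cast; ring
    have hmem : (x * y) - ((ex * ey : ↥E) : E') ∈ mset B := by
      rw [hid]
      exact mset_add (mset_mul_left hx hey) (mset_mul_left (hEB ey) hex)
    rw [hspec hex, hspec hey, hspec hmem]
    push_cast; ring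
  have hresne : ∀ x ∈ B, x ≠ 0 → x⁻¹ ∈ B → res x ≠ 0 := by
    intro x hx hx0 hxi h0
    obtain ⟨e, he⟩ := hresex x hx
    have h1 : res x = ↑e := hspec he
    have he0 : (e : E') = 0 := by rw [← h1, h0]
    have hxm : x ∈ mset B := by
      have := he
      rwa [he0, sub_zero] at this
    exact not_mem_mset_of_unit hx hx0 hxi hxm
  have hresunit : ∀ x ∈ B.toSubring, res x ≠ 0 → x⁻¹ ∈ B.toSubring := by
    intro x hx hne
    obtain ⟨e, he⟩ := hresex x hx
    have hre : res x = ↑e := hspec he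
    have he0 : (e : E') ≠ 0 := by rw [← hre]; exact hne
    exact inv_mem_of_not_mset hx (unit_of_add_mset (hEB e) he0 (hEinvB e) he)
  have hresα : res α = ↑c := hspec hmc
  have hα0 : α ≠ 0 := by
    intro h
    apply htr
    rw [h]
    exact isAlgebraic_zero
  have hinvmc : α⁻¹ - ((c⁻¹ : ↥E) : E') ∈ mset B := by
    have hcinv : ((c⁻¹ : ↥E) : E') = ((c : E'))⁻¹ := by norm_cast
    have hident : α⁻¹ - ((c⁻¹ : ↥E) : E') = (α⁻¹ * ((c⁻¹ : ↥E) : E')) * (↑c - α) := by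
      rw [hcinv]
      field_simp
    rw [hident]
    refine mset_mul_left (mul_mem hαinvB ?_) ?_
    · exact hEB _
    · have := mset_neg hmc
      rwa [neg_sub] at this
  have hresαinv : res α⁻¹ = ((c⁻¹ : ↥E) : E') := hspec hinvmc
  refine ⟨{ dom := B.toSubring
            dom_le := fun x _ => Set.mem_univ x
            res := res
            res_one := hresone
            res_add := hresadd
            res_mul := hresmul
            res_mem := fun x _ => resFun_mem x
            base_subset := fun x hx => hEB ⟨x, hx⟩
            res_id := hresid
            vring := fun x _ hx => (B.mem_or_inv_mem x).resolve_left hx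
            res_unit := hresunit
            res_nonunit := fun x hx hx0 hxi => hresne x hx hx0 hxi },
    hαB, hαinvB, ?_, ?_, hsB, ?_⟩
  · rw [show (α : E') = α from rfl]
    show res α ∈ K
    rw [hresα]
    exact hcK
  · show res α⁻¹ ∈ K
    rw [hresαinv]
    have h1 : ((c⁻¹ : ↥E) : E') = ((c : E'))⁻¹ := by norm_cast
    rw [h1]
    exact K.inv_mem hcK
  · intro m
    have hmulid : s m * g m = f m := by
      rw [hsfg m]
      exact div_mul_cancel₀ (f m) (hg0 m)
    have hphimul : coeffMap res (s m) * coeffMap res (g m) = coeffMap res (f m) := by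
      rw [← coeffMap_mul hres0 hresadd hresmul (hsB m) (hgB m), hmulid]
    have hlcB : (g m).leadingCoeff ∈ B := by
      rw [HahnSeries.leadingCoeff_eq]
      exact hgB m _
    have hlc0 : (g m).leadingCoeff ≠ 0 := HahnSeries.leadingCoeff_ne_zero.mpr (hg0 m)
    have hreslc : res ((g m).leadingCoeff) ≠ 0 := hresne _ hlcB hlc0 (hglcinvB m)
    have hφg0 : coeffMap res (g m) ≠ 0 := by
      intro h
      apply hreslc
      rw [HahnSeries.leadingCoeff_eq, ← coeffMap_coeff hres0 (g m) ((g m).order), h,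
        HahnSeries.coeff_zero]
    have hsm : coeffMap res (s m) = coeffMap res (f m) / coeffMap res (g m) :=
      (eq_div_iff hφg0).mpr hphimul
    rw [hsm]
    refine Subfield.div_mem _ ?_ ?_
    · refine mem_ratSubfieldOver_of_finite (Set.Finite.subset (hf m)
        (coeffMap_support_subset _)) ?_
      intro g'
      rw [coeffMap_coeff hres0]
      exact resFun_mem _
    · refine mem_ratSubfieldOver_of_finite (Set.Finite.subset (hg m)
        (coeffMap_support_subset _)) ?_
      intro g'
      rw [coeffMap_coeff hres0]
      exact resFun_mem _
end
end

section
/- Let E/K be an extension of fields and G an ordered abelian group. Then, inside E((G)), one has K((G)) ∩ E(G) = K(G); that is, a power series with all coefficients in K that equals (the power series expansion of) a rational function over E is a rational function over K. -/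
noncomputable section

open HahnSeries Classical

variable (F : Type*) [Field F] (G : Type*) [AddCommGroup G] [LinearOrder G] [IsOrderedAddMonoid G]

section CoeffInterAuxSection
namespace CoeffInterAux

open HahnSeries

variable {E : Type*} [Field E] {Γ : Type*} [AddCommGroup Γ] [LinearOrder Γ] [IsOrderedAddMonoid Γ]

lemma coeff_sum {ι : Type*} (s : Finset ι) (f : ι → HahnSeries Γ E) (g : Γ) :
    (∑ i ∈ s, f i).coeff g = ∑ i ∈ s, (f i).coeff g := by
  classical
  induction s using Finset.induction with
  | empty => simp
  | insert _ _ h ih => rw [Finset.sum_insert h, Finset.sum_insert h, HahnSeries.coeff_add, ih]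

variable (Γ) in
/-- The subring of Hahn series with finite support and coefficients in `K`. -/
def finK (K : Subfield E) : Subring (HahnSeries Γ E) where
  carrier := {f | f.support.Finite ∧ ∀ g, f.coeff g ∈ K}
  zero_mem' := ⟨by simp, fun g => by rw [HahnSeries.coeff_zero]; exact zero_mem K⟩
  one_mem' := ⟨(Set.finite_singleton 0).subset support_single_subset, fun g => by
    rw [show (1 : HahnSeries Γ E) = single 0 1 from rfl, coeff_single]
    split
    · exact one_mem K
    · exact zero_mem K⟩
  add_mem' := fun {a b} ha hb => ⟨(ha.1.union hb.1).subset (support_add_subset a b),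
    fun g => by rw [HahnSeries.coeff_add]; exact add_mem (ha.2 g) (hb.2 g)⟩
  neg_mem' := fun {a} ha => ⟨by rw [support_neg]; exact ha.1,
    fun g => by rw [HahnSeries.coeff_neg]; exact neg_mem (ha.2 g)⟩
  mul_mem' := fun {a b} ha hb => ⟨(ha.1.add hb.1).subset support_mul_subset,
    fun g => by
      rw [HahnSeries.coeff_mul]
      exact sum_mem fun ij _ => mul_mem (ha.2 ij.1) (hb.2 ij.2)⟩

lemma mem_finK {K : Subfield E} {f : HahnSeries Γ E} :
    f ∈ finK Γ K ↔ f.support.Finite ∧ ∀ g, f.coeff g ∈ K := Iff.rfl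

variable (Γ) in
def genSet (K : Subfield E) : Set (HahnSeries Γ E) :=
  {x | ∃ (g : Γ) (a : E), a ∈ K ∧ x = HahnSeries.single g a}

lemma ring_closure_le_finK (K : Subfield E) :
    Subring.closure (genSet Γ K) ≤ finK Γ K := by
  rw [Subring.closure_le]
  rintro x ⟨g, a, ha, rfl⟩
  refine ⟨(Set.finite_singleton g).subset support_single_subset, fun g' => ?_⟩
  rw [coeff_single]
  split
  · exact ha
  · exact zero_mem K

lemma mem_ring_closure_of_finK {K : Subfield E} {f : HahnSeries Γ E} (hf : f ∈ finK Γ K) :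
    f ∈ Subring.closure (genSet Γ K) := by
  classical
  have hrepr : f = ∑ g ∈ hf.1.toFinset, single g (f.coeff g) := by
    ext g'
    rw [coeff_sum]
    by_cases hg : g' ∈ hf.1.toFinset
    · rw [Finset.sum_eq_single g' (fun b _ hb => by rw [coeff_single_of_ne (Ne.symm hb)])
        (fun h => absurd hg h), coeff_single_same]
    · rw [Finset.sum_eq_zero fun b hb => coeff_single_of_ne fun h => hg (by rw [h]; exact hb)]
      by_contra hne
      exact hg (hf.1.mem_toFinset.2 hne)
  rw [hrepr]
  exact sum_mem fun g _ => Subring.subset_closure ⟨g, f.coeff g, hf.2 g, rfl⟩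


variable (Γ) in
/-- The ring hom `K((Γ)) →+* E((Γ))` induced by the inclusion `K ⊆ E`. -/
def ψ (K : Subfield E) : HahnSeries Γ K →+* HahnSeries Γ E where
  toFun f := f.map (K.subtype : K →+* E)
  map_one' := HahnSeries.map_one (K.subtype : K →+* E).toMonoidWithZeroHom
  map_mul' x y := HahnSeries.map_mul (K.subtype : K →ₙ+* E)
  map_zero' := by ext; simp
  map_add' x y := HahnSeries.map_add K.subtype.toAddMonoidHom

lemma ψ_coeff (K : Subfield E) (f : HahnSeries Γ K) (g : Γ) :
    (ψ Γ K f).coeff g = (f.coeff g : E) := rfl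

lemma mem_coeffK_iff_range {K : Subfield E} (f : HahnSeries Γ E) :
    (∀ g, f.coeff g ∈ K) ↔ f ∈ Set.range (ψ Γ K) := by
  constructor
  · intro h
    refine ⟨⟨fun g => ⟨f.coeff g, h g⟩, f.isPWO_support'.mono fun g hg => ?_⟩, ?_⟩
    · simp only [Function.mem_support, ne_eq] at hg ⊢
      exact fun h0 => hg (Subtype.ext h0)
    · ext g; rfl
  · rintro ⟨y, rfl⟩ g
    rw [ψ_coeff]
    exact (y.coeff g).2

section proj

variable {K : Subfield E} (ℓ : E →ₗ[K] K)

/-- Coefficientwise application of a `K`-linear functional, as a `ZeroHom`. -/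
def zℓ : ZeroHom E E := ⟨fun e => (ℓ e : E), by simp⟩

lemma map_support_subset (h : HahnSeries Γ E) :
    (h.map (zℓ ℓ)).support ⊆ h.support := by
  intro g hg
  simp only [HahnSeries.mem_support, HahnSeries.map_coeff] at hg ⊢
  exact fun h0 => hg (by rw [h0]; simp [zℓ])

lemma proj_mul_coeff (h x : HahnSeries Γ E) (hx : ∀ g, x.coeff g ∈ K) (g : Γ) :
    (h.map (zℓ ℓ) * x).coeff g = ((ℓ ((h * x).coeff g) : K) : E) := by
  rw [HahnSeries.coeff_mul_left' h.isPWO_support (map_support_subset ℓ h),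
      HahnSeries.coeff_mul, map_sum, AddSubmonoidClass.coe_finset_sum]
  refine Finset.sum_congr rfl fun ij _ => ?_
  obtain ⟨k, hk⟩ : ∃ k : K, (k : E) = x.coeff ij.2 := ⟨⟨_, hx ij.2⟩, rfl⟩
  have h1 : h.coeff ij.1 * x.coeff ij.2 = k • h.coeff ij.1 := by
    rw [Subring.smul_def, smul_eq_mul, ← hk]; ring
  rw [HahnSeries.map_coeff, h1, map_smul, smul_eq_mul, MulMemClass.coe_mul]
  show (ℓ (h.coeff ij.1) : E) * x.coeff ij.2 = (k : E) * (ℓ (h.coeff ij.1) : E)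
  rw [← hk, mul_comm]

end proj

end CoeffInterAux
end CoeffInterAuxSection

/-- For a field extension `E/K` and an ordered abelian group `G`, inside `E((G))` one has
`K((G)) ∩ E(G) = K(G)`. -/
theorem coeff_field_inter_rational
    (E : Type*) [Field E] (K : Subfield E)
    (G : Type*) [AddCommGroup G] [LinearOrder G] [IsOrderedAddMonoid G] :
    coeffIn E G ↑K ∩ ↑(ratSubfield E G) = (ratSubfieldOver E G K : Set (HahnSeries G E)) := by
  classical
  open CoeffInterAux in
  refine Set.Subset.antisymm ?_ ?_
  · rintro f ⟨hco, hrat⟩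
    have hco' : ∀ g, f.coeff g ∈ K := hco
    rw [SetLike.mem_coe]
    have hrat' : f ∈ Subfield.closure (genSet G (⊤ : Subfield E)) := hrat
    rw [Subfield.mem_closure_iff] at hrat'
    obtain ⟨p, hp, q, hq, hpq⟩ := hrat'
    by_cases hq0 : q = 0
    · subst hq0; rw [div_zero] at hpq; rw [← hpq]; exact zero_mem _
    have hp' := ring_closure_le_finK (Γ := G) (⊤ : Subfield E) hp
    have hq' := ring_closure_le_finK (Γ := G) (⊤ : Subfield E) hq
    have hqf : q * f = p := by rw [← hpq]; field_simp
    obtain ⟨g0, hg0⟩ := HahnSeries.support_nonempty_iff.2 hq0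
    rw [HahnSeries.mem_support] at hg0
    set b := Module.Basis.ofVectorSpace K E with hb
    have hrepr0 : b.repr (q.coeff g0) ≠ 0 :=
      fun h => hg0 ((LinearEquiv.map_eq_zero_iff b.repr).mp h)
    obtain ⟨t, ht⟩ := Finsupp.ne_iff.1 hrepr0
    rw [Finsupp.coe_zero, Pi.zero_apply] at ht
    set ℓ : E →ₗ[K] K := (Finsupp.lapply t).comp (b.repr : E →ₗ[K] _) with hℓ
    have hℓ' : ∀ e : E, ℓ e = b.repr e t := fun e => rfl
    set P := p.map (zℓ ℓ) with hP
    set Q := q.map (zℓ ℓ) with hQ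
    have hQf : Q * f = P := by
      ext g
      rw [hQ, proj_mul_coeff ℓ q f hco' g, hqf, hP, HahnSeries.map_coeff]
      rfl
    have hQ0 : Q ≠ 0 := by
      intro h
      apply ht
      have : Q.coeff g0 = 0 := by rw [h]; rfl
      rw [hQ, HahnSeries.map_coeff] at this
      have : ℓ (q.coeff g0) = 0 := Subtype.ext this
      rwa [hℓ'] at this
    have memP : P ∈ ratSubfieldOver E G K :=
      Subfield.subring_closure_le _ (mem_ring_closure_of_finK
        ⟨hp'.1.subset (map_support_subset ℓ p), fun g => by
          rw [hP, HahnSeries.map_coeff]; exact (ℓ (p.coeff g)).2⟩)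
    have memQ : Q ∈ ratSubfieldOver E G K :=
      Subfield.subring_closure_le _ (mem_ring_closure_of_finK
        ⟨hq'.1.subset (map_support_subset ℓ q), fun g => by
          rw [hQ, HahnSeries.map_coeff]; exact (ℓ (q.coeff g)).2⟩)
    rw [show f = P / Q from (eq_div_iff hQ0).2 (by rw [mul_comm]; exact hQf)]
    exact div_mem memP memQ
  · intro f hf
    constructor
    · have hle : ratSubfieldOver E G K ≤ (ψ G K).fieldRange := by
        rw [ratSubfieldOver, Subfield.closure_le]
        rintro x ⟨g, a, ha, rfl⟩
        exact ⟨HahnSeries.single g (⟨a, ha⟩ : K), by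
          ext g'
          rw [ψ_coeff, HahnSeries.coeff_single, HahnSeries.coeff_single]
          split <;> rfl⟩
      intro g
      exact (mem_coeffK_iff_range f).2 (hle hf) g
    · have hle : ratSubfieldOver E G K ≤ ratSubfield E G := by
        rw [ratSubfieldOver, ratSubfield, ratSubfieldOver]
        apply Subfield.closure_mono
        rintro x ⟨g, a, ha, rfl⟩
        exact ⟨g, a, trivial, rfl⟩
      exact hle hf
end
end
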